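/- If G is a finite connected simple graph without isolated vertices, then Dom has a winning strategy in the Sepy-start Disjoint Domination Game on G even in the variant where Sepy is allowed to pass on any of his turns except the very first move of the game (while Dom must make a legal move whenever one exists). -/

import Mathlib

namespace DDG

variable {V : Type*}

/-- The closed neighborhood `N[v]` of a vertex `v`. -/
def closedNbhd (G : SimpleGraph V) (v : V) : Set V := insert v (G.neighborSet v)

/-- `D` is a dominating set of `G`: every vertex has a member of `D`
in its closed neighborhood. -/
def Dominates (G : SimpleGraph V) (D : Set V) : Prop :=
  ∀ v : V, (closedNbhd G v ∩ D).Nonempty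

/-- A position of the game: the sets of purple and blue vertices. -/
structure Pos (V : Type*) where
  purple : Set V
  blue : Set V

namespace Pos

/-- The vertex class of a color (`true` = purple, `false` = blue). -/
def colorSet (p : Pos V) (c : Bool) : Set V := if c then p.purple else p.blue

/-- The position obtained by coloring vertex `v` with color `c`. -/
def play (p : Pos V) (v : V) (c : Bool) : Pos V :=
  if c then ⟨insert v p.purple, p.blue⟩ else ⟨p.purple, insert v p.blue⟩

end Pos

/-- A legal move of the Disjoint Domination Game: select an uncolored vertex `v`
and a color `c` such that some `u ∈ N[v]` is not yet dominated in color `c`. -/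
def LegalMove (G : SimpleGraph V) (p : Pos V) (v : V) (c : Bool) : Prop :=
  v ∉ p.purple ∪ p.blue ∧ ∃ u ∈ closedNbhd G v, closedNbhd G u ∩ p.colorSet c = ∅

/-- End condition ⟨s⟩: some closed neighborhood is monochromatic; Sepy wins. -/
def SepyEnd (G : SimpleGraph V) (p : Pos V) : Prop :=
  ∃ v : V, closedNbhd G v ⊆ p.purple ∨ closedNbhd G v ⊆ p.blue

/-- End condition ⟨d⟩: both color classes are dominating sets; Dom wins. -/
def DomEnd (G : SimpleGraph V) (p : Pos V) : Prop :=
  Dominates G p.purple ∧ Dominates G p.blue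

/-- `DomWins G turn p` : Dom has a winning strategy in the Disjoint Domination Game
from position `p`, where `turn = true` iff it is Dom's move. -/
inductive DomWins (G : SimpleGraph V) : Bool → Pos V → Prop
  | terminal (turn : Bool) (p : Pos V) :
      ¬ SepyEnd G p → DomEnd G p → DomWins G turn p
  | domStep (p : Pos V) (v : V) (c : Bool) :
      ¬ SepyEnd G p → ¬ DomEnd G p → LegalMove G p v c →
      DomWins G false (p.play v c) → DomWins G true p
  | sepyStep (p : Pos V) :
      ¬ SepyEnd G p → ¬ DomEnd G p →
      (∃ v c, LegalMove G p v c) →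
      (∀ v c, LegalMove G p v c → DomWins G true (p.play v c)) →
      DomWins G false p

/-- `SepyWins G turn p` : Sepy has a winning strategy in the Disjoint Domination Game
from position `p`, where `turn = true` iff it is Dom's move. -/
inductive SepyWins (G : SimpleGraph V) : Bool → Pos V → Prop
  | terminal (turn : Bool) (p : Pos V) : SepyEnd G p → SepyWins G turn p
  | sepyStep (p : Pos V) (v : V) (c : Bool) :
      ¬ SepyEnd G p → ¬ DomEnd G p → LegalMove G p v c →
      SepyWins G true (p.play v c) → SepyWins G false p
  | domStep (p : Pos V) :
      ¬ SepyEnd G p → ¬ DomEnd G p →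
      (∃ v c, LegalMove G p v c) →
      (∀ v c, LegalMove G p v c → SepyWins G false (p.play v c)) →
      SepyWins G true p

end DDG


namespace DDG
/-- `DomWinsSP G turn first p` : Dom has a winning strategy in the variant of the
Disjoint Domination Game in which Sepy may pass on any of his turns except the very
first move of the game, while Dom must move whenever a legal move exists.
Here `turn = true` iff it is Dom's move, and `first = true` iff no move of the game
has been made yet. -/
inductive DomWinsSP (G : SimpleGraph V) : Bool → Bool → Pos V → Prop
  | terminal (turn first : Bool) (p : Pos V) :
      ¬ SepyEnd G p → DomEnd G p → DomWinsSP G turn first p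
  | domStep (first : Bool) (p : Pos V) (v : V) (c : Bool) :
      ¬ SepyEnd G p → ¬ DomEnd G p → LegalMove G p v c →
      DomWinsSP G false false (p.play v c) → DomWinsSP G true first p
  | sepyStep (first : Bool) (p : Pos V) :
      ¬ SepyEnd G p → ¬ DomEnd G p →
      (∃ v c, LegalMove G p v c) →
      (∀ v c, LegalMove G p v c → DomWinsSP G true false (p.play v c)) →
      (first = false → DomWinsSP G true false p) →
      DomWinsSP G false first p
end DDG

open DDG

section Aux

open DDG

variable {V : Type*} {G : SimpleGraph V} {p : Pos V}

lemma mem_closedNbhd {u v : V} : u ∈ closedNbhd G v ↔ u = v ∨ G.Adj v u := by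
  simp [closedNbhd]

lemma self_mem_closedNbhd (v : V) : v ∈ closedNbhd G v := Set.mem_insert _ _

lemma closedNbhd_comm {u v : V} : u ∈ closedNbhd G v ↔ v ∈ closedNbhd G u := by
  simp only [mem_closedNbhd]
  constructor
  · rintro (rfl | h)
    · exact Or.inl rfl
    · exact Or.inr h.symm
  · rintro (rfl | h)
    · exact Or.inl rfl
    · exact Or.inr h.symm

lemma mem_colorSet_union {v : V} : v ∈ p.purple ∪ p.blue ↔ ∃ c, v ∈ p.colorSet c := by
  constructor
  · rintro (h | h)
    exacts [⟨true, h⟩, ⟨false, h⟩]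
  · rintro ⟨c, h⟩
    cases c
    · exact Or.inr h
    · exact Or.inl h

lemma mem_play_colorSet {v w : V} {c c' : Bool} :
    w ∈ (p.play v c).colorSet c' ↔ w ∈ p.colorSet c' ∨ (w = v ∧ c' = c) := by
  cases c <;> cases c' <;> simp [Pos.play, Pos.colorSet] <;> tauto

lemma colorSet_subset_play (p : Pos V) (v : V) (c c' : Bool) :
    p.colorSet c' ⊆ (p.play v c).colorSet c' :=
  fun _ hw => mem_play_colorSet.2 (Or.inl hw)

lemma play_union (p : Pos V) (v : V) (c : Bool) :
    (p.play v c).purple ∪ (p.play v c).blue = insert v (p.purple ∪ p.blue) := by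
  cases c <;> simp [Pos.play, Set.insert_union, Set.union_insert]

/-- The two color classes are disjoint. -/
def Disj (p : Pos V) : Prop := ∀ (c : Bool) (v : V), v ∈ p.colorSet c → v ∉ p.colorSet (!c)

/-- Every colored vertex is dominated in both colors. -/
def K1 (G : SimpleGraph V) (p : Pos V) : Prop :=
  ∀ (c : Bool) (v : V), v ∈ p.colorSet c → (closedNbhd G v ∩ p.colorSet (!c)).Nonempty

/-- `K1` holds except possibly at the vertex `a`. -/
def K1e (G : SimpleGraph V) (p : Pos V) (a : V) : Prop :=
  ∀ (c : Bool) (v : V), v ∈ p.colorSet c → v ≠ a →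
    (closedNbhd G v ∩ p.colorSet (!c)).Nonempty

lemma sepyEnd_iff : SepyEnd G p ↔ ∃ (v : V) (c : Bool), closedNbhd G v ⊆ p.colorSet c := by
  constructor
  · rintro ⟨v, h | h⟩
    exacts [⟨v, true, h⟩, ⟨v, false, h⟩]
  · rintro ⟨v, c, h⟩
    cases c
    · exact ⟨v, Or.inr h⟩
    · exact ⟨v, Or.inl h⟩

lemma domEnd_iff : DomEnd G p ↔ ∀ (v : V) (c : Bool), (closedNbhd G v ∩ p.colorSet c).Nonempty := by
  constructor
  · rintro ⟨h1, h2⟩ v c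
    cases c
    · exact h2 v
    · exact h1 v
  · intro h
    exact ⟨fun v => h v true, fun v => h v false⟩

lemma not_sepyEnd_of_K1 (hd : Disj p) (hk : K1 G p) : ¬ SepyEnd G p := by
  rw [sepyEnd_iff]
  rintro ⟨v, c, hsub⟩
  have hv : v ∈ p.colorSet c := hsub (self_mem_closedNbhd v)
  obtain ⟨u, huN, huC⟩ := hk c v hv
  exact hd c u (hsub huN) huC

lemma exists_legal (hse : ¬ SepyEnd G p) (hde : ¬ DomEnd G p) :
    ∃ v c, LegalMove G p v c := by
  rw [domEnd_iff] at hde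
  push_neg at hde
  obtain ⟨v, c, hvc⟩ := hde
  by_cases h : ∃ u ∈ closedNbhd G v, u ∉ p.purple ∪ p.blue
  · obtain ⟨u, huN, huU⟩ := h
    exact ⟨u, c, huU, v, closedNbhd_comm.1 huN, hvc⟩
  · push_neg at h
    exfalso
    apply hse
    rw [sepyEnd_iff]
    refine ⟨v, !c, fun w hw => ?_⟩
    obtain ⟨c', hc'⟩ := mem_colorSet_union.1 (h w hw)
    have hne : c' ≠ c := by
      rintro rfl
      have hmem : w ∈ closedNbhd G v ∩ p.colorSet c' := ⟨hw, hc'⟩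
      rw [hvc] at hmem
      exact hmem
    have : c' = !c := by cases c <;> cases c' <;> simp_all
    rwa [this] at hc'

lemma disj_play (hd : Disj p) {v : V} (hv : v ∉ p.purple ∪ p.blue) (c : Bool) :
    Disj (p.play v c) := by
  intro c' w hw hw'
  rcases mem_play_colorSet.1 hw with h1 | ⟨hwv, hcc⟩
  · rcases mem_play_colorSet.1 hw' with h2 | ⟨hwv2, hcc2⟩
    · exact hd c' w h1 h2
    · rw [hwv2] at h1
      exact hv (mem_colorSet_union.2 ⟨c', h1⟩)
  · rcases mem_play_colorSet.1 hw' with h2 | ⟨hwv2, hcc2⟩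
    · rw [hwv] at h2
      exact hv (mem_colorSet_union.2 ⟨!c', h2⟩)
    · rw [hcc] at hcc2
      cases c <;> simp_all

lemma not_sepyEnd_play (hiso : ∀ v : V, ∃ u, G.Adj v u) (hd : Disj p) (hk : K1 G p)
    {v : V} {c : Bool} (hleg : LegalMove G p v c) : ¬ SepyEnd G (p.play v c) := by
  rw [sepyEnd_iff]
  rintro ⟨w, c', hsub⟩
  rcases mem_play_colorSet.1 (hsub (self_mem_closedNbhd w)) with hold | ⟨hwv, hcc⟩
  · obtain ⟨u, huN, huC⟩ := hk c' w hold
    exact disj_play hd hleg.1 c c' u (hsub huN) (colorSet_subset_play _ _ _ _ huC)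
  · obtain ⟨hvU, u, huN, huE⟩ := hleg
    rw [hwv, hcc] at hsub
    have key : ∀ q, q ∈ closedNbhd G v → q ∈ p.colorSet c ∨ q = v := by
      intro q hq
      rcases mem_play_colorSet.1 (hsub hq) with h1 | ⟨h2, -⟩
      · exact Or.inl h1
      · exact Or.inr h2
    rcases key u huN with h1 | h1
    · have hmem : u ∈ closedNbhd G u ∩ p.colorSet c := ⟨self_mem_closedNbhd u, h1⟩
      rw [huE] at hmem
      exact hmem
    · rw [h1] at huE
      obtain ⟨z, hz⟩ := hiso v
      have hzN : z ∈ closedNbhd G v := mem_closedNbhd.2 (Or.inr hz)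
      rcases key z hzN with h2 | h2
      · have hmem : z ∈ closedNbhd G v ∩ p.colorSet c := ⟨hzN, h2⟩
        rw [huE] at hmem
        exact hmem
      · rw [h2] at hz
        exact G.loopless.irrefl v hz

lemma walk_frontier (W : Set V) : ∀ {x z : V}, G.Walk x z → x ∈ W → z ∉ W →
    ∃ a b, G.Adj a b ∧ a ∈ W ∧ b ∉ W := by
  intro x z w
  induction w with
  | nil => intro h1 h2; exact absurd h1 h2
  | @cons a b c hab q ih =>
    intro h1 h2
    by_cases hb : b ∈ W
    · exact ih hb h2
    · exact ⟨a, b, hab, h1, hb⟩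

lemma exists_good_move (hconn : G.Connected) (hd : Disj p) (hk : K1 G p)
    (hne : (p.purple ∪ p.blue).Nonempty) (hde : ¬ DomEnd G p) :
    ∃ v c, LegalMove G p v c ∧ (closedNbhd G v ∩ p.colorSet (!c)).Nonempty := by
  rw [domEnd_iff] at hde
  push_neg at hde
  obtain ⟨x, c0, hx0⟩ := hde
  have hxU : x ∉ p.purple ∪ p.blue := by
    intro hmem
    obtain ⟨c', hc'⟩ := mem_colorSet_union.1 hmem
    by_cases h : c' = c0
    · subst h
      have hmem2 : x ∈ closedNbhd G x ∩ p.colorSet c' := ⟨self_mem_closedNbhd x, hc'⟩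
      rw [hx0] at hmem2
      exact hmem2
    · have hcc : c' = !c0 := by cases c0 <;> cases c' <;> simp_all
      rw [hcc] at hc'
      obtain ⟨u, huN, huC⟩ := hk _ x hc'
      rw [Bool.not_not] at huC
      have hmem2 : u ∈ closedNbhd G x ∩ p.colorSet c0 := ⟨huN, huC⟩
      rw [hx0] at hmem2
      exact hmem2
  by_cases hcase : (closedNbhd G x ∩ (p.purple ∪ p.blue)).Nonempty
  · obtain ⟨y, hyN, hyU⟩ := hcase
    obtain ⟨c', hc'⟩ := mem_colorSet_union.1 hyU
    have hcc : c' = !c0 := by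
      by_contra h
      have hcc2 : c' = c0 := by cases c0 <;> cases c' <;> simp_all
      subst hcc2
      have hmem2 : y ∈ closedNbhd G x ∩ p.colorSet c' := ⟨hyN, hc'⟩
      rw [hx0] at hmem2
      exact hmem2
    rw [hcc] at hc'
    exact ⟨x, c0, ⟨hxU, x, self_mem_closedNbhd x, hx0⟩, ⟨y, hyN, hc'⟩⟩
  · rw [Set.not_nonempty_iff_eq_empty] at hcase
    obtain ⟨z, hz⟩ := hne
    have hxW : x ∈ {u : V | closedNbhd G u ∩ (p.purple ∪ p.blue) = ∅} := hcase
    have hzW : z ∉ {u : V | closedNbhd G u ∩ (p.purple ∪ p.blue) = ∅} := by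
      intro h
      have hmem : z ∈ closedNbhd G z ∩ (p.purple ∪ p.blue) := ⟨self_mem_closedNbhd z, hz⟩
      rw [Set.mem_setOf_eq] at h
      rw [h] at hmem
      exact hmem
    obtain ⟨wk⟩ := hconn.preconnected x z
    obtain ⟨t, w, htw, htW, hwW⟩ := walk_frontier _ wk hxW hzW
    have htW' : closedNbhd G t ∩ (p.purple ∪ p.blue) = ∅ := htW
    have hwmem : w ∈ closedNbhd G t := mem_closedNbhd.2 (Or.inr htw)
    have hwU : w ∉ p.purple ∪ p.blue := by
      intro h
      have hmem : w ∈ closedNbhd G t ∩ (p.purple ∪ p.blue) := ⟨hwmem, h⟩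
      rw [htW'] at hmem
      exact hmem
    have hwNe : (closedNbhd G w ∩ (p.purple ∪ p.blue)).Nonempty := by
      rw [Set.nonempty_iff_ne_empty]
      exact hwW
    obtain ⟨y, hyN, hyU⟩ := hwNe
    obtain ⟨c1, hc1⟩ := mem_colorSet_union.1 hyU
    refine ⟨w, !c1, ⟨hwU, t, closedNbhd_comm.1 hwmem, ?_⟩, ?_⟩
    · apply Set.eq_empty_iff_forall_notMem.2
      rintro q ⟨hq1, hq2⟩
      have hmem : q ∈ closedNbhd G t ∩ (p.purple ∪ p.blue) :=
        ⟨hq1, mem_colorSet_union.2 ⟨_, hq2⟩⟩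
      rw [htW'] at hmem
      exact hmem
    · rw [Bool.not_not]
      exact ⟨y, hyN, hc1⟩

lemma K1_play (hk : K1 G p) {v : V} {c : Bool}
    (hgood : (closedNbhd G v ∩ p.colorSet (!c)).Nonempty) : K1 G (p.play v c) := by
  intro c' w hw
  rcases mem_play_colorSet.1 hw with hold | ⟨hwv, hcc⟩
  · obtain ⟨u, h1, h2⟩ := hk c' w hold
    exact ⟨u, h1, colorSet_subset_play _ _ _ _ h2⟩
  · obtain ⟨u, h1, h2⟩ := hgood
    rw [hwv, hcc]
    exact ⟨u, h1, colorSet_subset_play _ _ _ _ h2⟩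

lemma K1e_play (hk : K1 G p) (v : V) (c : Bool) : K1e G (p.play v c) v := by
  intro c' w hw hne
  rcases mem_play_colorSet.1 hw with hold | ⟨hwv, -⟩
  · obtain ⟨u, h1, h2⟩ := hk c' w hold
    exact ⟨u, h1, colorSet_subset_play _ _ _ _ h2⟩
  · exact absurd hwv hne

lemma K1_fix {a : V} (hke : K1e G p a) {ca : Bool} (ha : a ∈ p.colorSet ca)
    (haE : closedNbhd G a ∩ p.colorSet (!ca) = ∅) {u : V} (huN : u ∈ closedNbhd G a) :
    K1 G (p.play u (!ca)) := by
  intro c' w hw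
  rcases mem_play_colorSet.1 hw with hold | ⟨hwu, hcc⟩
  · by_cases hwa : w = a
    · rw [hwa] at hold ⊢
      by_cases hc : c' = ca
      · rw [hc]
        exact ⟨u, huN, mem_play_colorSet.2 (Or.inr ⟨rfl, rfl⟩)⟩
      · have hcc2 : c' = !ca := by cases ca <;> cases c' <;> simp_all
        rw [hcc2] at hold
        have hmem : a ∈ closedNbhd G a ∩ p.colorSet (!ca) := ⟨self_mem_closedNbhd a, hold⟩
        rw [haE] at hmem
        exact hmem.elim
    · obtain ⟨q, h1, h2⟩ := hke c' w hold hwa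
      exact ⟨q, h1, colorSet_subset_play _ _ _ _ h2⟩
  · rw [hwu, hcc]
    refine ⟨a, closedNbhd_comm.1 huN, ?_⟩
    rw [Bool.not_not]
    exact colorSet_subset_play _ _ _ _ ha

lemma unc_lt [Fintype V] {v : V} (hv : v ∉ p.purple ∪ p.blue) (c : Bool) :
    (((p.play v c).purple ∪ (p.play v c).blue)ᶜ).ncard < ((p.purple ∪ p.blue)ᶜ).ncard := by
  apply Set.ncard_lt_ncard _ (Set.toFinite _)
  rw [play_union, Set.ssubset_iff_subset_ne]
  constructor
  · exact Set.compl_subset_compl.2 (Set.subset_insert _ _)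
  · intro heq
    have hv' : v ∈ ((p.purple ∪ p.blue)ᶜ : Set V) := hv
    rw [← heq] at hv'
    exact hv' (Set.mem_insert _ _)

lemma main_induction [Fintype V] (hconn : G.Connected) (hiso : ∀ v : V, ∃ u, G.Adj v u) :
    ∀ n : ℕ, ∀ p : Pos V, ((p.purple ∪ p.blue)ᶜ).ncard ≤ n →
      ((Disj p ∧ (∃ a, K1e G p a) ∧ ¬ SepyEnd G p ∧ (p.purple ∪ p.blue).Nonempty →
          DomWinsSP G true false p) ∧
       (Disj p ∧ K1 G p ∧ (p.purple ∪ p.blue).Nonempty → DomWinsSP G false false p)) := by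
  intro n
  induction n using Nat.strong_induction_on with
  | _ n IH =>
    intro p hn
    have HD : Disj p ∧ (∃ a, K1e G p a) ∧ ¬ SepyEnd G p ∧ (p.purple ∪ p.blue).Nonempty →
        DomWinsSP G true false p := by
      rintro ⟨hdisj, ⟨a, hke⟩, hse, hne⟩
      by_cases hde : DomEnd G p
      · exact DomWinsSP.terminal _ _ _ hse hde
      by_cases hdef : ∃ ca, a ∈ p.colorSet ca ∧ closedNbhd G a ∩ p.colorSet (!ca) = ∅
      · obtain ⟨ca, haM, haE⟩ := hdef
        have hu : ∃ u ∈ closedNbhd G a, u ∉ p.purple ∪ p.blue := by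
          by_contra h
          push_neg at h
          apply hse
          rw [sepyEnd_iff]
          refine ⟨a, ca, fun w hw => ?_⟩
          obtain ⟨c', hc'⟩ := mem_colorSet_union.1 (h w hw)
          by_cases hcc : c' = ca
          · subst hcc
            exact hc'
          · have hcc2 : c' = !ca := by cases ca <;> cases c' <;> simp_all
            rw [hcc2] at hc'
            have hmem : w ∈ closedNbhd G a ∩ p.colorSet (!ca) := ⟨hw, hc'⟩
            rw [haE] at hmem
            exact hmem.elim
        obtain ⟨u, huN, huU⟩ := hu
        have hleg : LegalMove G p u (!ca) := ⟨huU, a, closedNbhd_comm.1 huN, haE⟩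
        apply DomWinsSP.domStep false p u (!ca) hse hde hleg
        have hlt : (((p.play u (!ca)).purple ∪ (p.play u (!ca)).blue)ᶜ).ncard < n :=
          lt_of_lt_of_le (unc_lt huU _) hn
        refine (IH _ hlt _ le_rfl).2 ⟨disj_play hdisj huU _, K1_fix hke haM haE huN, ?_⟩
        rw [play_union]
        exact Set.insert_nonempty _ _
      · push_neg at hdef
        have hk : K1 G p := by
          intro c w hw
          by_cases hwa : w = a
          · subst hwa
            exact hdef c hw
          · exact hke c w hw hwa
        obtain ⟨v, c, hleg, hgood⟩ := exists_good_move hconn hdisj hk hne hde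
        apply DomWinsSP.domStep false p v c hse hde hleg
        have hlt : (((p.play v c).purple ∪ (p.play v c).blue)ᶜ).ncard < n :=
          lt_of_lt_of_le (unc_lt hleg.1 _) hn
        refine (IH _ hlt _ le_rfl).2 ⟨disj_play hdisj hleg.1 _, K1_play hk hgood, ?_⟩
        rw [play_union]
        exact Set.insert_nonempty _ _
    refine ⟨HD, ?_⟩
    rintro ⟨hdisj, hk, hne⟩
    have hse := not_sepyEnd_of_K1 hdisj hk
    by_cases hde : DomEnd G p
    · exact DomWinsSP.terminal _ _ _ hse hde
    refine DomWinsSP.sepyStep false p hse hde (exists_legal hse hde) ?_ ?_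
    · intro v c hleg
      have hse' := not_sepyEnd_play hiso hdisj hk hleg
      have hlt : (((p.play v c).purple ∪ (p.play v c).blue)ᶜ).ncard < n :=
        lt_of_lt_of_le (unc_lt hleg.1 _) hn
      refine (IH _ hlt _ le_rfl).1 ⟨disj_play hdisj hleg.1 _, ⟨v, K1e_play hk v c⟩, hse', ?_⟩
      rw [play_union]
      exact Set.insert_nonempty _ _
    · intro _
      obtain ⟨z, hz⟩ := hne
      exact HD ⟨hdisj, ⟨z, fun c w hw _ => hk c w hw⟩, hse, ⟨z, hz⟩⟩

end Aux



/-- Theorem 3″ of the paper: on every finite connected isolate-free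
graph, Dom has a winning strategy in the Sepy-start Disjoint Domination Game even in
the variant in which Sepy may pass on any of his turns except the very first move of
the game (while Dom must move whenever a legal move exists). -/
theorem statement9 {V : Type*} [Fintype V] (G : SimpleGraph V)
    (hconn : G.Connected) (hiso : ∀ v : V, ∃ u : V, G.Adj v u) :
    DomWinsSP G false true ⟨∅, ∅⟩ := by
  obtain ⟨v0⟩ := hconn.nonempty
  have hdisj : Disj (⟨∅, ∅⟩ : Pos V) := by
    intro c w hw
    cases c <;> simp [Pos.colorSet] at hw
  have hk : K1 G (⟨∅, ∅⟩ : Pos V) := by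
    intro c w hw
    cases c <;> simp [Pos.colorSet] at hw
  have hse : ¬ SepyEnd G (⟨∅, ∅⟩ : Pos V) := by
    rintro ⟨v, h | h⟩ <;> exact h (self_mem_closedNbhd v)
  have hde : ¬ DomEnd G (⟨∅, ∅⟩ : Pos V) := by
    rintro ⟨h1, -⟩
    obtain ⟨u, -, hu⟩ := h1 v0
    exact hu
  have hex : ∃ v c, LegalMove G (⟨∅, ∅⟩ : Pos V) v c := by
    refine ⟨v0, true, ?_, v0, self_mem_closedNbhd v0, ?_⟩
    · simp
    · simp [Pos.colorSet]
  refine DomWinsSP.sepyStep true ⟨∅, ∅⟩ hse hde hex ?_ ?_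
  · intro v c hleg
    refine (main_induction hconn hiso _ _ le_rfl).1
      ⟨disj_play hdisj hleg.1 _, ⟨v, K1e_play hk v c⟩, not_sepyEnd_play hiso hdisj hk hleg, ?_⟩
    rw [play_union]
    exact Set.insert_nonempty _ _
  · intro h
    exact absurd h (by simp)
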